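/- For every real t with 0 < t < 2: (i) Ỹ₁(t)·Z̃₁(t)² = Y₁(t)·Z₁(t)²; (ii) Ỹ₂(t)²·Z̃₂(t)² = Y₂(t)²·Z₂(t)²; (iii) Ỹ₃(t)³·Z̃₃(t)² = Y₃(t)³·Z₃(t)². Equivalently, with Y_{1,s} := Ỹ_s/Y_s and Z_{11,s} := Z̃_s/Z_s, one has Y_{1,s}^s·Z_{11,s}² = 1 for s = 1, 2, 3. -/
import Mathlib


/-! Göttsche–Kool universal functions of a real variable `t`, with all square
roots the nonnegative real square roots.  The `t`-suffixed versions
(`gkYt`, `gkZt`, `gkSt`) are the sign-flipped functions obtained by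
replacing `√t` with `−√t`. -/

noncomputable def gkY1 (t : ℝ) : ℝ := (1 + t) + Real.sqrt t * Real.sqrt (1 + 3*t/4)
noncomputable def gkYt1 (t : ℝ) : ℝ := (1 + t) - Real.sqrt t * Real.sqrt (1 + 3*t/4)
noncomputable def gkY2 (t : ℝ) : ℝ := Real.sqrt t + Real.sqrt (1 + t)
noncomputable def gkYt2 (t : ℝ) : ℝ := -Real.sqrt t + Real.sqrt (1 + t)
noncomputable def gkY3 (t : ℝ) : ℝ := 1 + Real.sqrt t * Real.sqrt (1 - t/4)
noncomputable def gkYt3 (t : ℝ) : ℝ := 1 - Real.sqrt t * Real.sqrt (1 - t/4)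
noncomputable def gkZ1 (t : ℝ) : ℝ :=
  (1 + 3*t/4 - (1/2) * Real.sqrt t * Real.sqrt (1 + 3*t/4)) / (1 + t/2)
noncomputable def gkZt1 (t : ℝ) : ℝ :=
  (1 + 3*t/4 + (1/2) * Real.sqrt t * Real.sqrt (1 + 3*t/4)) / (1 + t/2)
noncomputable def gkZ2 (t : ℝ) : ℝ := 1 + t - Real.sqrt t * Real.sqrt (1 + t)
noncomputable def gkZt2 (t : ℝ) : ℝ := 1 + t + Real.sqrt t * Real.sqrt (1 + t)
noncomputable def gkZ3 (t : ℝ) : ℝ :=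
  (1 + t/2) * ((1 - t/4)*(1 + t/2)
    - (3/2) * Real.sqrt t * Real.sqrt (1 - t/4) * (1 - t/6)) / (1 - t/2)^3
noncomputable def gkZt3 (t : ℝ) : ℝ :=
  (1 + t/2) * ((1 - t/4)*(1 + t/2)
    + (3/2) * Real.sqrt t * Real.sqrt (1 - t/4) * (1 - t/6)) / (1 - t/2)^3
noncomputable def gkS1 (t : ℝ) : ℝ := -t/2 + Real.sqrt t * Real.sqrt (1 + 3*t/4)
noncomputable def gkSt1 (t : ℝ) : ℝ := -t/2 - Real.sqrt t * Real.sqrt (1 + 3*t/4)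
noncomputable def gkS2 (t : ℝ) : ℝ := -t + Real.sqrt t * Real.sqrt (1 + t)
noncomputable def gkSt2 (t : ℝ) : ℝ := -t - Real.sqrt t * Real.sqrt (1 + t)
noncomputable def gkS3 (t : ℝ) : ℝ :=
  (-(3/2)*t*(1 - t/6) + Real.sqrt t * Real.sqrt (1 - t/4) * (1 + t/2)) / (1 - t/2)
noncomputable def gkSt3 (t : ℝ) : ℝ :=
  (-(3/2)*t*(1 - t/6) - Real.sqrt t * Real.sqrt (1 - t/4) * (1 + t/2)) / (1 - t/2)
noncomputable def gkV2 (t : ℝ) : ℝ := (1 + t)^2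
noncomputable def gkV3 (t : ℝ) : ℝ := (1 + t/2)^3 / (1 - t/2)
noncomputable def gkW1 (t : ℝ) : ℝ := (1 + t/2)⁻¹
noncomputable def gkW2 (t : ℝ) : ℝ := (Real.sqrt (1 + t))⁻¹
noncomputable def gkW3 (t : ℝ) : ℝ := 2 / (2 + t)
noncomputable def gkX1 (t : ℝ) : ℝ :=
  (1 + t/2) ^ (-(3:ℝ)/4) * (1 + 3*t/4) ^ (-(1:ℝ)/2)
noncomputable def gkX2 (t : ℝ) : ℝ := (1 + t) ^ (-(3:ℝ)/2)
noncomputable def gkX3 (t : ℝ) : ℝ :=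
  (1 - t/2) ^ ((3:ℝ)/4) * (1 - t/4) ^ (-(1:ℝ)/2) * (1 + t/2) ^ (-(4:ℝ))

set_option maxHeartbeats 2000000 in
/-- for `0 < t < 2`, one has `Ỹ_s^s Z̃_s² = Y_s^s Z_s²` for
`s = 1, 2, 3`; equivalently, with `Y_{1,s} = Ỹ_s/Y_s` and
`Z_{11,s} = Z̃_s/Z_s`, the constraint `Y_{1,s}^s Z_{11,s}² = 1` holds. -/
theorem stmt_11 (t : ℝ) (ht0 : 0 < t) (ht2 : t < 2) :
    (gkYt1 t * gkZt1 t ^ 2 = gkY1 t * gkZ1 t ^ 2 ∧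
     gkYt2 t ^ 2 * gkZt2 t ^ 2 = gkY2 t ^ 2 * gkZ2 t ^ 2 ∧
     gkYt3 t ^ 3 * gkZt3 t ^ 2 = gkY3 t ^ 3 * gkZ3 t ^ 2) ∧
    ((gkYt1 t / gkY1 t) * (gkZt1 t / gkZ1 t) ^ 2 = 1 ∧
     (gkYt2 t / gkY2 t) ^ 2 * (gkZt2 t / gkZ2 t) ^ 2 = 1 ∧
     (gkYt3 t / gkY3 t) ^ 3 * (gkZt3 t / gkZ3 t) ^ 2 = 1) := by
  have ht0' : (0:ℝ) ≤ t := le_of_lt ht0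
  have hp1 : (Real.sqrt t * Real.sqrt (1 + 3*t/4))^2 = t * (1 + 3*t/4) := by
    rw [mul_pow, Real.sq_sqrt ht0', Real.sq_sqrt (by nlinarith : (0:ℝ) ≤ 1 + 3*t/4)]
  have hp1n : 0 ≤ Real.sqrt t * Real.sqrt (1 + 3*t/4) :=
    mul_nonneg (Real.sqrt_nonneg _) (Real.sqrt_nonneg _)
  have hu : (Real.sqrt t)^2 = t := Real.sq_sqrt ht0'
  have hw : (Real.sqrt (1 + t))^2 = 1 + t := Real.sq_sqrt (by linarith)
  have hun : 0 ≤ Real.sqrt t := Real.sqrt_nonneg _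
  have hwp : 0 < Real.sqrt (1 + t) := Real.sqrt_pos.mpr (by linarith)
  have hp3 : (Real.sqrt t * Real.sqrt (1 - t/4))^2 = t * (1 - t/4) := by
    rw [mul_pow, Real.sq_sqrt ht0', Real.sq_sqrt (by nlinarith : (0:ℝ) ≤ 1 - t/4)]
  have hp3n : 0 ≤ Real.sqrt t * Real.sqrt (1 - t/4) :=
    mul_nonneg (Real.sqrt_nonneg _) (Real.sqrt_nonneg _)
  -- the three equalities
  have e1 : gkYt1 t * gkZt1 t ^ 2 = gkY1 t * gkZ1 t ^ 2 := by
    unfold gkYt1 gkZt1 gkY1 gkZ1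
    rw [div_pow, div_pow]
    linear_combination ((-(Real.sqrt t * Real.sqrt (1 + 3*t/4)))/2 / (1 + t/2)^2) * hp1
  have e2 : gkYt2 t ^ 2 * gkZt2 t ^ 2 = gkY2 t ^ 2 * gkZ2 t ^ 2 := by
    unfold gkYt2 gkZt2 gkY2 gkZ2
    linear_combination (4 * Real.sqrt t * Real.sqrt (1 + t) * ((1 + t) - (Real.sqrt t)^2)) * hw
  have e3 : gkYt3 t ^ 3 * gkZt3 t ^ 2 = gkY3 t ^ 3 * gkZ3 t ^ 2 := by
    unfold gkYt3 gkZt3 gkY3 gkZ3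
    rw [div_pow, div_pow]
    linear_combination (((1 + t/2)^2 * 2 * (Real.sqrt t * Real.sqrt (1 - t/4)) *
      ((-3*((3/2)*(1 - t/6))^2 + 6*((1 - t/4)*(1 + t/2))*((3/2)*(1 - t/6))
        - ((1 - t/4)*(1 + t/2))^2)
       + (-((3/2)*(1 - t/6))^2) * ((Real.sqrt t * Real.sqrt (1 - t/4))^2 + t*(1 - t/4))))
      / ((1 - t/2)^3)^2) * hp3
  -- nonvanishing
  have hY1 : (0:ℝ) < gkY1 t := by unfold gkY1; nlinarith
  have hZ1 : (0:ℝ) < gkZ1 t := by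
    unfold gkZ1
    apply div_pos _ (by linarith : (0:ℝ) < 1 + t/2)
    nlinarith [hp1, hp1n]
  have hY2 : (0:ℝ) < gkY2 t := by unfold gkY2; linarith
  have hZ2 : (0:ℝ) < gkZ2 t := by
    unfold gkZ2
    nlinarith [hu, hw, mul_nonneg hun (le_of_lt hwp)]
  have hY3 : (0:ℝ) < gkY3 t := by unfold gkY3; nlinarith
  have hZ3 : (0:ℝ) < gkZ3 t := by
    unfold gkZ3
    apply div_pos _ (pow_pos (by linarith) 3 : (0:ℝ) < (1 - t/2)^3)
    have h1 : (0:ℝ) < (1 - t/4)*(1 + t/2) - (3/2) * Real.sqrt t * Real.sqrt (1 - t/4) * (1 - t/6) := by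
      nlinarith [hp3, hp3n, sq_nonneg (1 - t/2),
        mul_pos (show (0:ℝ) < 1 - t/4 by linarith) (show (0:ℝ) < (1 - t/2)^3 from pow_pos (by linarith) 3)]
    nlinarith [h1]
  refine ⟨⟨e1, e2, e3⟩, ?_, ?_, ?_⟩
  · rw [div_pow, div_mul_div_comm, e1, div_self (by positivity)]
  · rw [div_pow, div_pow, div_mul_div_comm, e2, div_self (by positivity)]
  · rw [div_pow, div_pow, div_mul_div_comm, e3, div_self (by positivity)]
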